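/- With B_I and H_I as in the construction (columns of B_I are all elements of {1} × (2^{k-1}Z_{2^k})^{i_1} × ... × (2^0 Z_{2^k})^{i_k}), every word z ∈ Z_{2^k}^n whose coordinate sum is odd lies at d^◇-distance exactly 1 from exactly one codeword of H_I. -/

import Mathlib

/-- The weight `wt^◇`. -/
def wtDia {M : ℕ} (x : ZMod M) : ℕ :=
  if x = 0 then 0 else if Odd x.val then 1 else 2

/-- The induced distance `d^◇`. -/
def dDia {M : ℕ} (n : ℕ) (x y : Fin n → ZMod M) : ℕ :=
  ∑ i, wtDia (y i - x i)

/-- Index type for the rows of `B_I`: one row of ones, plus `I j` rows in block `j`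
(`j = 0, …, k-1`, corresponding to `i_{j+1}` in the paper). -/
def colIdx (k : ℕ) (I : Fin k → ℕ) : Type :=
  Unit ⊕ (Σ j : Fin k, Fin (I j))

instance (k : ℕ) (I : Fin k → ℕ) : Fintype (colIdx k I) := by
  unfold colIdx; infer_instance

instance (k : ℕ) (I : Fin k → ℕ) : DecidableEq (colIdx k I) := by
  unfold colIdx; infer_instance

/-- The set `{1} × (2^{k-1}Z_{2^k})^{i_1} × (2^{k-2}Z_{2^k})^{i_2} × … × (2^0 Z_{2^k})^{i_k}`
of columns of `B_I`. -/
def colSet (k : ℕ) (I : Fin k → ℕ) : Set (colIdx k I → ZMod (2 ^ k)) :=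
  {v | v (Sum.inl ()) = 1 ∧
    ∀ (j : Fin k) (t : Fin (I j)),
      ∃ c : ZMod (2 ^ k), v (Sum.inr ⟨j, t⟩) = (2 ^ (k - 1 - j.val) : ZMod (2 ^ k)) * c}

/-- The linear code `H_I = {h | B_I hᵀ = 0}` with parity-check matrix `B_I`,
whose columns are `b 0, …, b (n-1)`. -/
def kerCode (k n : ℕ) {ι : Type} [Fintype ι]
    (b : Fin n → ι → ZMod (2 ^ k)) : Set (Fin n → ZMod (2 ^ k)) :=
  {h | ∀ t : ι, ∑ i, h i * b i t = 0}

lemma wtDia_zero {M : ℕ} : wtDia (0 : ZMod M) = 0 := by simp [wtDia]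

lemma wtDia_eq_one_iff {M : ℕ} [NeZero M] (x : ZMod M) : wtDia x = 1 ↔ Odd x.val := by
  unfold wtDia
  split_ifs with h1 h2
  · subst h1; simp [ZMod.val_zero, Nat.odd_iff]
  · simp [h2]
  · simp [h2]

lemma wtDia_eq_zero_imp {M : ℕ} (x : ZMod M) (h : wtDia x = 0) : x = 0 := by
  unfold wtDia at h
  split_ifs at h with h1 h2
  exact h1

lemma natCast_zmod_two_eq_one_iff (n : ℕ) : (n : ZMod 2) = 1 ↔ Odd n := by
  rw [← ZMod.natCast_mod n 2, Nat.odd_iff]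
  rcases Nat.mod_two_eq_zero_or_one n with h | h <;> rw [h] <;> simp

lemma isUnit_of_oddVal {j : ℕ} (x : ZMod (2 ^ j)) (h : Odd x.val) : IsUnit x := by
  haveI : NeZero (2 ^ j) := ⟨pow_ne_zero j two_ne_zero⟩
  rw [← ZMod.natCast_rightInverse x]
  exact (ZMod.isUnit_iff_coprime _ _).mpr (Nat.Coprime.pow_right j h.coprime_two_right)

lemma sum_eq_one_support {n : ℕ} (f : Fin n → ℕ) (h : ∑ i, f i = 1) :
    ∃ i, f i = 1 ∧ ∀ j, j ≠ i → f j = 0 := by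
  have hex : ∃ i, f i ≠ 0 := by
    by_contra hc
    push_neg at hc
    rw [Finset.sum_eq_zero (fun i _ => hc i)] at h
    omega
  obtain ⟨i, hi⟩ := hex
  have hsplit := Finset.add_sum_erase Finset.univ f (Finset.mem_univ i)
  rw [h] at hsplit
  have hfi : f i = 1 := by omega
  have hrest : ∑ j ∈ Finset.univ.erase i, f j = 0 := by omega
  refine ⟨i, hfi, fun j hj => ?_⟩
  exact (Finset.sum_eq_zero_iff.mp hrest) j (Finset.mem_erase.mpr ⟨hj, Finset.mem_univ j⟩)

/-- Every word `z ∈ Z_{2^k}^n` with odd coordinate sum lies at `d^◇`-distance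
exactly `1` from exactly one codeword of `H_I`. -/
theorem stmt_7 (k r : ℕ) (hk : 1 ≤ k) (I : Fin k → ℕ)
    (hI : ∑ j, (j.val + 1) * I j = r)
    (b : Fin (2 ^ r) → colIdx k I → ZMod (2 ^ k))
    (hb_inj : Function.Injective b)
    (hb_range : Set.range b = colSet k I) :
    ∀ z : Fin (2 ^ r) → ZMod (2 ^ k), Odd (∑ i, (z i).val) →
      ∃! h, h ∈ kerCode k (2 ^ r) b ∧ dDia (2 ^ r) z h = 1 := by
  haveI : NeZero (2 ^ k) := ⟨pow_ne_zero k two_ne_zero⟩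
  intro z hz
  have hbS : ∀ i, b i ∈ colSet k I := fun i => hb_range ▸ Set.mem_range_self i
  -- the syndrome
  set s : colIdx k I → ZMod (2 ^ k) := fun t => ∑ i, z i * b i t with hs
  have hst : ∀ t, s t = ∑ i, z i * b i t := fun t => rfl
  have hsinl : s (Sum.inl ()) = ∑ i, z i := by
    refine (hst _).trans ?_
    exact Finset.sum_congr rfl (fun i _ => by rw [(hbS i).1, mul_one])
  -- parity: the syndrome at inl is odd
  have hdvd : 2 ∣ 2 ^ k := dvd_pow_self 2 (by omega)
  set ε : ZMod (2 ^ k) →+* ZMod 2 := ZMod.castHom hdvd (ZMod 2) with hεdef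
  have hεval : ∀ x : ZMod (2 ^ k), ε x = (x.val : ZMod 2) := by
    intro x
    rw [hεdef, ZMod.castHom_apply, ← ZMod.natCast_val]
  have hodd_iff : ∀ x : ZMod (2 ^ k), Odd x.val ↔ ε x = 1 := by
    intro x
    rw [hεval, natCast_zmod_two_eq_one_iff]
  have hsum_odd : Odd (s (Sum.inl ())).val := by
    rw [hodd_iff, hsinl, map_sum]
    rw [Finset.sum_congr rfl (fun i _ => hεval (z i)), ← Nat.cast_sum]
    exact (natCast_zmod_two_eq_one_iff _).mpr hz
  set u : ZMod (2 ^ k) := -(s (Sum.inl ())) with hu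
  have hu_odd : Odd u.val := by
    rw [hodd_iff] at hsum_odd ⊢
    rw [hu, map_neg, hsum_odd]
    decide
  have hu_unit : IsUnit u := isUnit_of_oddVal u hu_odd
  obtain ⟨uu, huu⟩ := hu_unit
  set w : ZMod (2 ^ k) := ((uu⁻¹ : (ZMod (2 ^ k))ˣ) : ZMod (2 ^ k)) with hw
  have huw : u * w = 1 := by rw [← huu, hw, ← Units.val_mul, mul_inv_cancel, Units.val_one]
  -- the column vector that matching codewords must hit
  set v : colIdx k I → ZMod (2 ^ k) := fun t => -(w * s t) with hv
  have hvt : ∀ t, v t = -(w * s t) := fun t => rfl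
  have hvS : v ∈ colSet k I := by
    constructor
    · refine (hvt _).trans ?_
      have hse : s (Sum.inl ()) = -u := by rw [hu, neg_neg]
      rw [hse, mul_neg, neg_neg, mul_comm, huw]
    · intro j t
      have hc : ∀ i : Fin (2 ^ r), ∃ c, b i (Sum.inr ⟨j, t⟩) =
          (2 ^ (k - 1 - j.val) : ZMod (2 ^ k)) * c := fun i => (hbS i).2 j t
      choose c hcspec using hc
      refine ⟨-(w * ∑ i, z i * c i), ?_⟩
      refine (hvt _).trans ?_
      have hse : s (Sum.inr ⟨j, t⟩) =
          (2 ^ (k - 1 - j.val) : ZMod (2 ^ k)) * ∑ i, z i * c i := by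
        refine (hst _).trans ?_
        rw [Finset.mul_sum]
        exact Finset.sum_congr rfl (fun i _ => by rw [hcspec i]; ring)
      rw [hse]; ring
  have hvrange : v ∈ Set.range b := hb_range ▸ hvS
  obtain ⟨i₀, hi₀⟩ := hvrange
  -- the codeword
  set h : Fin (2 ^ r) → ZMod (2 ^ k) := fun i => if i = i₀ then z i + u else z i with hh
  have hht : ∀ i, h i = if i = i₀ then z i + u else z i := fun i => rfl
  have hdiff : ∀ i, h i - z i = if i = i₀ then u else 0 := by
    intro i
    rw [hht]
    split_ifs <;> ring
  have hdecomp : ∀ i, h i = z i + (if i = i₀ then u else 0) := by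
    intro i
    rw [hht]
    split_ifs <;> ring
  have hubv : ∀ t, u * b i₀ t = -(s t) := by
    intro t
    rw [hi₀, hvt, mul_neg, ← mul_assoc, huw, one_mul]
  have hker : h ∈ kerCode k (2 ^ r) b := by
    intro t
    have he : ∀ i, h i * b i t = z i * b i t + (if i = i₀ then u * b i t else 0) := by
      intro i
      rw [hdecomp i, add_mul]
      split_ifs <;> ring
    rw [Finset.sum_congr rfl (fun i _ => he i), Finset.sum_add_distrib,
      Finset.sum_ite_eq' Finset.univ i₀ (fun i => u * b i t)]
    simp only [Finset.mem_univ, if_true]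
    rw [hubv t, ← hst t]
    ring
  have hdist : dDia (2 ^ r) z h = 1 := by
    unfold dDia
    have he : ∀ i, wtDia (h i - z i) = if i = i₀ then 1 else 0 := by
      intro i
      rw [hdiff i]
      split_ifs
      · exact (wtDia_eq_one_iff u).mpr hu_odd
      · exact wtDia_zero
    rw [Finset.sum_congr rfl (fun i _ => he i), Finset.sum_ite_eq' Finset.univ i₀ (fun _ => 1)]
    simp
  refine ⟨h, ⟨hker, hdist⟩, ?_⟩
  -- uniqueness
  rintro h' ⟨hker', hdist'⟩
  obtain ⟨i', hi'1, hi'0⟩ := sum_eq_one_support (fun i => wtDia (h' i - z i)) hdist'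
  set u' : ZMod (2 ^ k) := h' i' - z i' with hu'
  have hu'_odd : Odd u'.val := (wtDia_eq_one_iff u').mp hi'1
  have hfix : ∀ j, j ≠ i' → h' j = z j := by
    intro j hj
    have h0 : h' j - z j = 0 := wtDia_eq_zero_imp _ (hi'0 j hj)
    linear_combination h0
  have hdecomp' : ∀ i, h' i = z i + (if i = i' then u' else 0) := by
    intro i
    split_ifs with hii
    · subst hii; rw [hu']; ring
    · rw [hfix i hii, add_zero]
  have hsynd : ∀ t, s t + u' * b i' t = 0 := by
    intro t
    have hker'' := hker' t
    have heq : ∀ i, h' i * b i t = z i * b i t + (if i = i' then u' * b i t else 0) := by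
      intro i
      rw [hdecomp' i, add_mul]
      split_ifs <;> ring
    rw [Finset.sum_congr rfl (fun i _ => heq i), Finset.sum_add_distrib,
      Finset.sum_ite_eq' Finset.univ i' (fun i => u' * b i t)] at hker''
    simp only [Finset.mem_univ, if_true] at hker''
    rw [hst t]
    exact hker''
  have hu'u : u' = u := by
    have he := hsynd (Sum.inl ())
    rw [(hbS i').1, mul_one] at he
    rw [hu]
    linear_combination he
  have hbi' : b i' = b i₀ := by
    funext t
    have e1 := hsynd t
    rw [hu'u] at e1
    have e2 := hubv t
    have e3 : u * b i' t = u * b i₀ t := by rw [e2]; linear_combination e1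
    calc b i' t = (u * w) * b i' t := by rw [huw, one_mul]
      _ = w * (u * b i' t) := by ring
      _ = w * (u * b i₀ t) := by rw [e3]
      _ = (u * w) * b i₀ t := by ring
      _ = b i₀ t := by rw [huw, one_mul]
  have hii : i' = i₀ := hb_inj hbi'
  funext i
  rw [hht i]
  split_ifs with hi
  · rw [hdecomp' i, if_pos (hi.trans hii.symm), hu'u]
  · exact hfix i (fun he => hi (he.trans hii))
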